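/- Besicovitch covering with size control: Let A ⊂ ℝ^d be a bounded set and for each x ∈ A let Q_x be a closed axis-parallel cube centered at x. Then there exists a finite or countable subfamily {Q_{x_i}}_i of {Q_x}_{x∈A} covering A with overlap bounded by a dimensional constant C(d) (i.e. χ_A ≤ Σ_i χ_{Q_{x_i}} ≤ C(d)), and with the additional property that whenever z ∈ A ∩ Q_{x_i} for some i, then ℓ(Q_z) ≤ 4 ℓ(Q_{x_i}). -/

import Mathlib

open MeasureTheory Metric Set ENNReal

noncomputable section

/-- Closed axis-parallel cube centered at `c` with side length `l`. -/
def cube {d : ℕ} (c : EuclideanSpace ℝ (Fin d)) (l : ℝ) :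
    Set (EuclideanSpace ℝ (Fin d)) := {y | ∀ i, |y i - c i| ≤ l / 2}

namespace Stmt7Aux

variable {d : ℕ}

lemma mem_cube {c y : EuclideanSpace ℝ (Fin d)} {l : ℝ} :
    y ∈ cube c l ↔ ∀ i, |y i - c i| ≤ l / 2 := Iff.rfl

lemma aux_real {h h' a b u : ℝ} (hh' : 0 < h') (h2 : 2 * h' < h)
    (ha : |a| ≤ h) (hb : |b| ≤ h') (hu : h < |u - a|) (hub : |u - b| ≤ h' / 3)
    (hsgn : 0 ≤ a ↔ 0 ≤ b) (hhalf : h / 2 < |a| ↔ h' / 2 < |b|) : False := by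
  have hb1 := abs_le.mp hb
  have hub1 := abs_le.mp hub
  have ha1 := abs_le.mp ha
  rcases le_or_gt 0 a with hA | hA
  · have hB : 0 ≤ b := hsgn.mp hA
    rw [abs_of_nonneg hA] at hhalf
    rw [abs_of_nonneg hB] at hhalf
    rcases abs_cases (u - a) with ⟨he, -⟩ | ⟨he, -⟩ <;> rw [he] at hu
    · linarith [hb1.2, hub1.1]
    · have h3 : h / 2 < a := by linarith [hub1.1]
      have h4 : h' / 2 < b := hhalf.mp h3
      linarith [hub1.1, ha1.2]
  · have hB : b < 0 := by
      by_contra hc; push_neg at hc; exact absurd (hsgn.mpr hc) (not_le.mpr hA)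
    rw [abs_of_neg hA] at hhalf
    rw [abs_of_neg hB] at hhalf
    rcases abs_cases (u - a) with ⟨he, -⟩ | ⟨he, -⟩ <;> rw [he] at hu
    · have h3 : h / 2 < -a := by linarith [hub1.2]
      have h4 : h' / 2 < -b := hhalf.mp h3
      linarith [hub1.2, ha1.1]
    · linarith [hb1.1, hub1.1, ha1.1]

lemma coord_le_dist (x y : EuclideanSpace ℝ (Fin d)) (i : Fin d) : |x i - y i| ≤ dist x y := by
  rw [EuclideanSpace.dist_eq]
  rw [show |x i - y i| = Real.sqrt ((x i - y i) ^ 2) from (Real.sqrt_sq_eq_abs _).symm]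
  apply Real.sqrt_le_sqrt
  have he : (x i - y i) ^ 2 = dist (x i) (y i) ^ 2 := by
    rw [Real.dist_eq, sq_abs]
  rw [he]
  exact Finset.single_le_sum (f := fun j => dist (x j) (y j) ^ 2)
    (fun j _ => sq_nonneg _) (Finset.mem_univ i)

lemma cube_eq_preimage (c : EuclideanSpace ℝ (Fin d)) (r : ℝ) :
    cube c r = ((MeasurableEquiv.toLp 2 (Fin d → ℝ)).symm) ⁻¹'
      (Set.univ.pi fun i => Icc (c i - r / 2) (c i + r / 2)) := by
  ext z
  simp only [cube, mem_setOf_eq, mem_preimage, Set.mem_pi, mem_univ, forall_true_left, mem_Icc,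
    MeasurableEquiv.toLp_symm_apply]
  constructor
  · intro hz i
    have := abs_le.mp (hz i)
    constructor <;> linarith [this.1, this.2]
  · intro hz i
    rw [abs_le]
    have := hz i
    constructor <;> linarith [this.1, this.2]

lemma cube_measurable (c : EuclideanSpace ℝ (Fin d)) (r : ℝ) : MeasurableSet (cube c r) := by
  rw [cube_eq_preimage]
  exact ((MeasurableEquiv.toLp 2 (Fin d → ℝ)).symm).measurable
    (MeasurableSet.univ_pi fun i => measurableSet_Icc)

lemma cube_volume (c : EuclideanSpace ℝ (Fin d)) (r : ℝ) :
    volume (cube c r) = (ENNReal.ofReal r) ^ d := by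
  rw [cube_eq_preimage]
  rw [(EuclideanSpace.volume_preserving_symm_measurableEquiv_toLp (Fin d)).measure_preimage
    (MeasurableSet.univ_pi fun i => measurableSet_Icc).nullMeasurableSet]
  rw [volume_pi_pi]
  have : ∀ i : Fin d, volume (Icc (c i - r / 2) (c i + r / 2)) = ENNReal.ofReal r := by
    intro i
    rw [Real.volume_Icc]
    congr 1
    ring
  rw [Finset.prod_congr rfl (fun i _ => this i), Finset.prod_const, Finset.card_univ,
    Fintype.card_fin]

lemma packing (p : EuclideanSpace ℝ (Fin d)) {δ R : ℝ} (hδ : 0 < δ) (hR : 0 ≤ R)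
    {T : Set (EuclideanSpace ℝ (Fin d))}
    (hT : ∀ y ∈ T, ∀ i, |y i - p i| ≤ R)
    (hsep : T.Pairwise fun y y' => ∃ i, δ < |y i - y' i|)
    {m : ℕ} (hm : 2 * R + δ ≤ m * δ) :
    T.Finite ∧ T.encard ≤ ((m ^ d : ℕ) : ℕ∞) := by
  classical
  have key : ∀ F : Finset (EuclideanSpace ℝ (Fin d)), ↑F ⊆ T → F.card ≤ m ^ d := by
    intro F hF
    have hdisj : (↑F : Set (EuclideanSpace ℝ (Fin d))).PairwiseDisjoint
        (fun y => cube y δ) := by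
      intro y hy y' hy' hne
      obtain ⟨i, hi⟩ := hsep (hF hy) (hF hy') hne
      rw [Function.onFun, Set.disjoint_left]
      intro z hz hz'
      have h1 : |z i - y i| ≤ δ / 2 := hz i
      have h2 : |z i - y' i| ≤ δ / 2 := hz' i
      have h3 : |y i - y' i| ≤ |y i - z i| + |z i - y' i| := abs_sub_le _ _ _
      rw [abs_sub_comm (y i) (z i)] at h3
      linarith
    have hsubU : (⋃ y ∈ F, cube y δ) ⊆ cube p (2 * R + δ) := by
      intro z hz
      rw [mem_iUnion₂] at hz
      obtain ⟨y, hyF, hzy⟩ := hz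
      intro i
      have h1 : |z i - y i| ≤ δ / 2 := hzy i
      have h2 : |y i - p i| ≤ R := hT y (hF hyF) i
      have h3 : |z i - p i| ≤ |z i - y i| + |y i - p i| := abs_sub_le _ _ _
      linarith
    have hsum := measure_biUnion_finset (μ := volume) hdisj (fun y _ => cube_measurable y δ)
    have hle : (F.card : ℝ≥0∞) * (ENNReal.ofReal δ) ^ d ≤
        (ENNReal.ofReal (2 * R + δ)) ^ d := by
      calc (F.card : ℝ≥0∞) * (ENNReal.ofReal δ) ^ d
          = ∑ y ∈ F, volume (cube y δ) := by
            rw [Finset.sum_congr rfl (fun y _ => cube_volume y δ), Finset.sum_const,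
              nsmul_eq_mul]
        _ = volume (⋃ y ∈ F, cube y δ) := hsum.symm
        _ ≤ volume (cube p (2 * R + δ)) := measure_mono hsubU
        _ = (ENNReal.ofReal (2 * R + δ)) ^ d := cube_volume p _
    have hle2 : (F.card : ℝ≥0∞) * (ENNReal.ofReal δ) ^ d ≤
        ((m ^ d : ℕ) : ℝ≥0∞) * (ENNReal.ofReal δ) ^ d := by
      refine hle.trans ?_
      have h4 : ENNReal.ofReal (2 * R + δ) ≤ ENNReal.ofReal ((m : ℝ) * δ) :=
        ENNReal.ofReal_le_ofReal hm
      calc (ENNReal.ofReal (2 * R + δ)) ^ d ≤ (ENNReal.ofReal ((m : ℝ) * δ)) ^ d :=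
            pow_le_pow_left' h4 d
        _ = ((m ^ d : ℕ) : ℝ≥0∞) * (ENNReal.ofReal δ) ^ d := by
            rw [ENNReal.ofReal_mul (by positivity), mul_pow, ENNReal.ofReal_natCast]
            push_cast
            ring
    have hδ0 : (ENNReal.ofReal δ) ^ d ≠ 0 := by
      apply pow_ne_zero
      simp only [ne_eq, ENNReal.ofReal_eq_zero, not_le]
      exact hδ
    have hδtop : (ENNReal.ofReal δ) ^ d ≠ ⊤ := by
      exact ENNReal.pow_ne_top ENNReal.ofReal_ne_top
    have := (ENNReal.mul_le_mul_iff_left hδ0 hδtop).mp hle2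
    exact_mod_cast this
  have hfin : T.Finite := by
    by_contra hinf
    obtain ⟨t, htT, htfin, htcard⟩ :=
      Set.Infinite.exists_subset_ncard_eq hinf (m ^ d + 1)
    have h1 := key htfin.toFinset (by rw [Set.Finite.coe_toFinset]; exact htT)
    rw [← Set.ncard_eq_toFinset_card t htfin, htcard] at h1
    omega
  refine ⟨hfin, ?_⟩
  rw [Set.Finite.encard_eq_coe_toFinset_card hfin]
  exact_mod_cast key hfin.toFinset (by rw [Set.Finite.coe_toFinset])

end Stmt7Aux
open Stmt7Aux in
theorem stmt7 {d : ℕ} :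
    ∃ C : ℕ, ∀ (A : Set (EuclideanSpace ℝ (Fin d))), Bornology.IsBounded A →
      ∀ l : EuclideanSpace ℝ (Fin d) → ℝ, (∀ x ∈ A, 0 < l x) → BddAbove (l '' A) →
        ∃ s : Set (EuclideanSpace ℝ (Fin d)), s ⊆ A ∧ s.Countable ∧
          A ⊆ ⋃ x ∈ s, cube x (l x) ∧
          (∀ y : EuclideanSpace ℝ (Fin d),
            {x ∈ s | y ∈ cube x (l x)}.encard ≤ (C : ℕ∞)) ∧
          (∀ z ∈ A, ∀ x ∈ s, z ∈ cube x (l x) → l z ≤ 4 * l x) := by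
  classical
  refine ⟨2 * 4 ^ d * 13 ^ d, ?_⟩
  intro A hAbd l hlpos hbdd
  rcases A.eq_empty_or_nonempty with rfl | hA
  · refine ⟨∅, Subset.rfl, countable_empty, by simp, ?_, by simp⟩
    intro y
    have : {x ∈ (∅ : Set (EuclideanSpace ℝ (Fin d))) | y ∈ cube x (l x)} = ∅ := by
      ext; simp
    rw [this]
    simp
  obtain ⟨p₀, hp₀⟩ := hA
  set M := sSup (l '' A) with hMdef
  have hMle : ∀ x ∈ A, l x ≤ M := fun x hx => le_csSup hbdd ⟨x, hx, rfl⟩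
  have hM0 : 0 < M := lt_of_lt_of_le (hlpos p₀ hp₀) (hMle p₀ hp₀)
  -- the good set
  set G : Set (EuclideanSpace ℝ (Fin d)) :=
    {y | y ∈ A ∧ ∀ z ∈ A, z ∈ cube y (l y) → l z ≤ 4 * l y} with hGdef
  have hGA : ∀ y ∈ G, y ∈ A := fun y hy => hy.1
  -- chain argument: every point has a "good" companion
  have hchain : ∀ n : ℕ, ∀ x ∈ A, M ≤ 4 ^ n * l x →
      ∃ y, y ∈ G ∧ l x ≤ l y ∧ ∀ i, |x i - y i| ≤ (l y - l x) / 6 := by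
    intro n
    induction n with
    | zero =>
      intro x hx hMx
      rw [pow_zero, one_mul] at hMx
      refine ⟨x, ⟨hx, fun z hz _ => ?_⟩, le_refl _, fun i => by simp⟩
      have h1 := hMle z hz
      have h2 := hlpos x hx
      linarith
    | succ n ih =>
      intro x hx hMx
      by_cases hxG : x ∈ G
      · exact ⟨x, hxG, le_refl _, fun i => by simp⟩
      · have hex : ∃ z ∈ A, z ∈ cube x (l x) ∧ 4 * l x < l z := by
          by_contra hc
          push_neg at hc
          exact hxG ⟨hx, fun z hz hzc => hc z hz hzc⟩
        obtain ⟨z, hzA, hzc, hzl⟩ := hex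
        have h4 : (0 : ℝ) < 4 ^ n := by positivity
        have hz4 : M ≤ 4 ^ n * l z := by
          rw [pow_succ] at hMx
          nlinarith
        obtain ⟨y, hyG, hyl, hyc⟩ := ih z hzA hz4
        have hlx := hlpos x hx
        refine ⟨y, hyG, by linarith, fun i => ?_⟩
        have h1 : |x i - y i| ≤ |x i - z i| + |z i - y i| := abs_sub_le _ _ _
        have h2 : |z i - x i| ≤ l x / 2 := hzc i
        rw [abs_sub_comm (z i) (x i)] at h2
        have h3 := hyc i
        linarith
  have hGex : ∀ x, x ∈ A → ∃ y, y ∈ G ∧ l x ≤ l y ∧ ∀ i, |x i - y i| ≤ (l y - l x) / 6 := by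
    intro x hx
    obtain ⟨n, hn⟩ : ∃ n : ℕ, M / l x < 4 ^ n :=
      pow_unbounded_of_one_lt _ (by norm_num : (1 : ℝ) < 4)
    refine hchain n x hx ?_
    rw [div_lt_iff₀ (hlpos x hx)] at hn
    linarith
  choose! g hgG hgl hgc using hGex
  -- the stage function
  have hstex : ∀ x : EuclideanSpace ℝ (Fin d), ∃ n : ℕ, x ∈ A → M < l (g x) * 2 ^ (n + 1) := by
    intro x
    by_cases hx : x ∈ A
    · have hg0 : 0 < l (g x) := lt_of_lt_of_le (hlpos x hx) (hgl x hx)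
      obtain ⟨n, hn⟩ : ∃ n : ℕ, M / l (g x) < 2 ^ n :=
        pow_unbounded_of_one_lt _ one_lt_two
      refine ⟨n, fun _ => ?_⟩
      rw [div_lt_iff₀ hg0] at hn
      have h2 : (2 : ℝ) ^ n ≤ 2 ^ (n + 1) := pow_le_pow_right₀ one_le_two (Nat.le_succ n)
      nlinarith
    · exact ⟨0, fun h => absurd h hx⟩
  set stg : EuclideanSpace ℝ (Fin d) → ℕ := fun x => Nat.find (hstex x) with hstgdef
  have hstg1 : ∀ x ∈ A, M < l (g x) * 2 ^ (stg x + 1) := fun x hx => Nat.find_spec (hstex x) hx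
  have hstg2 : ∀ x ∈ A, l (g x) * 2 ^ (stg x) ≤ M := by
    intro x hx
    rcases Nat.eq_zero_or_pos (stg x) with h0 | hpos
    · rw [h0, pow_zero, mul_one]
      exact hMle (g x) (hGA _ (hgG x hx))
    · obtain ⟨k, hk⟩ := Nat.exists_eq_succ_of_ne_zero (Nat.pos_iff_ne_zero.mp hpos)
      have hmin := Nat.find_min (hstex x) (show k < stg x by omega)
      push_neg at hmin
      rw [hk]
      exact hmin.2
  -- separation parameters
  set δs : ℕ → ℝ := fun n => M / (12 * 2 ^ n) with hδdef
  have hδpos : ∀ n, 0 < δs n := fun n => by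
    rw [hδdef]
    positivity
  -- maximal separated nets (Zorn)
  have hnetex : ∀ (W : Set (EuclideanSpace ℝ (Fin d))) (δ : ℝ), 0 ≤ δ →
      ∃ T, T ⊆ W ∧ (T.Pairwise fun y y' => ∃ i, δ < |y i - y' i|) ∧
        ∀ w ∈ W, ∃ y ∈ T, ∀ i, |w i - y i| ≤ δ := by
    intro W δ hδ
    set Sys := {T : Set (EuclideanSpace ℝ (Fin d)) |
      T ⊆ W ∧ T.Pairwise fun y y' => ∃ i, δ < |y i - y' i|} with hSys
    have hub : ∀ c ⊆ Sys, IsChain (· ⊆ ·) c → ∃ ub ∈ Sys, ∀ t ∈ c, t ⊆ ub := by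
      intro c hcS hchain'
      refine ⟨⋃₀ c, ⟨?_, ?_⟩, fun t ht => subset_sUnion_of_mem ht⟩
      · exact sUnion_subset fun t ht => (hcS ht).1
      · intro y hy y' hy' hne
        obtain ⟨t, ht, hyt⟩ := hy
        obtain ⟨t', ht', hy't⟩ := hy'
        rcases hchain'.total ht ht' with h | h
        · exact (hcS ht').2 (h hyt) hy't hne
        · exact (hcS ht).2 hyt (h hy't) hne
    obtain ⟨T, hTmax⟩ := zorn_subset Sys hub
    refine ⟨T, hTmax.prop.1, hTmax.prop.2, ?_⟩
    intro w hw
    by_contra hc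
    push_neg at hc
    have hwT : w ∉ T := by
      intro hwT
      obtain ⟨i, hi⟩ := hc w hwT
      simp only [sub_self, abs_zero] at hi
      linarith
    have hins : insert w T ∈ Sys := by
      constructor
      · exact insert_subset hw hTmax.prop.1
      · rw [Set.pairwise_insert]
        refine ⟨hTmax.prop.2, fun y hy hne => ⟨?_, ?_⟩⟩
        · obtain ⟨i, hi⟩ := hc y hy
          exact ⟨i, hi⟩
        · obtain ⟨i, hi⟩ := hc y hy
          rw [abs_sub_comm] at hi
          exact ⟨i, hi⟩
    exact hwT (hTmax.2 hins (subset_insert w T) (mem_insert w T))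
  choose pick hpick1 hpick2 hpick3 using fun (n : ℕ) (U : Set (EuclideanSpace ℝ (Fin d))) =>
    hnetex (g '' {x | x ∈ A ∧ stg x = n ∧ x ∉ U}) (δs n) (le_of_lt (hδpos n))
  -- the recursive construction
  obtain ⟨T, U, hU0, hUs, hTe⟩ :
      ∃ (T U : ℕ → Set (EuclideanSpace ℝ (Fin d))),
        U 0 = ∅ ∧ (∀ n, U (n + 1) = U n ∪ ⋃ y ∈ T n, cube y (l y)) ∧
          ∀ n, T n = pick n (U n) := by
    let F : ℕ → Set (EuclideanSpace ℝ (Fin d)) × Set (EuclideanSpace ℝ (Fin d)) := fun n =>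
      Nat.rec (motive := fun _ => Set (EuclideanSpace ℝ (Fin d)) × Set (EuclideanSpace ℝ (Fin d)))
        (pick 0 ∅, ∅)
        (fun k ih => (pick (k + 1) (ih.2 ∪ ⋃ y ∈ ih.1, cube y (l y)),
          ih.2 ∪ ⋃ y ∈ ih.1, cube y (l y))) n
    exact ⟨fun n => (F n).1, fun n => (F n).2, rfl, fun n => rfl, fun n => by cases n <;> rfl⟩
  set s : Set (EuclideanSpace ℝ (Fin d)) := ⋃ n, T n with hsdef
  have hTW : ∀ n, T n ⊆ g '' {x | x ∈ A ∧ stg x = n ∧ x ∉ U n} := fun n =>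
    (hTe n) ▸ hpick1 n (U n)
  have hTsep : ∀ n, (T n).Pairwise fun y y' => ∃ i, δs n < |y i - y' i| := fun n =>
    (hTe n) ▸ hpick2 n (U n)
  have hTnear : ∀ n, ∀ w ∈ g '' {x | x ∈ A ∧ stg x = n ∧ x ∉ U n},
      ∃ y ∈ T n, ∀ i, |w i - y i| ≤ δs n := fun n => (hTe n) ▸ hpick3 n (U n)
  have hTG : ∀ n, ∀ y ∈ T n, y ∈ G := by
    intro n y hy
    obtain ⟨x, ⟨hxA, -, -⟩, rfl⟩ := hTW n hy
    exact hgG x hxA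
  have hTub : ∀ n, ∀ y ∈ T n, l y * 2 ^ n ≤ M := by
    intro n y hy
    obtain ⟨x, ⟨hxA, hxs, -⟩, rfl⟩ := hTW n hy
    have := hstg2 x hxA
    rwa [hxs] at this
  have hTlb : ∀ n, ∀ y ∈ T n, M < l y * 2 ^ (n + 1) := by
    intro n y hy
    obtain ⟨x, ⟨hxA, hxs, -⟩, rfl⟩ := hTW n hy
    have := hstg1 x hxA
    rwa [hxs] at this
  have hTA : ∀ n, ∀ y ∈ T n, y ∈ A := fun n y hy => hGA y (hTG n y hy)
  have hTpos : ∀ n, ∀ y ∈ T n, 0 < l y := fun n y hy => hlpos y (hTA n y hy)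
  have hsA : s ⊆ A := by
    intro y hy
    rw [hsdef, mem_iUnion] at hy
    obtain ⟨n, hn⟩ := hy
    exact hTA n y hn
  have hUmono : ∀ n k : ℕ, n ≤ k → U n ⊆ U k := by
    intro n k hnk
    induction k, hnk using Nat.le_induction with
    | base => exact Subset.rfl
    | succ k hnk ih =>
      refine ih.trans ?_
      rw [hUs k]
      exact subset_union_left
  have hcubU : ∀ m n : ℕ, m < n → ∀ y ∈ T m, cube y (l y) ⊆ U n := by
    intro m n hmn y hy
    have h1 : cube y (l y) ⊆ U (m + 1) := by
      rw [hUs m]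
      intro z hz
      exact mem_union_right _ (mem_biUnion hy hz)
    exact h1.trans (hUmono (m + 1) n hmn)
  have hUcov : ∀ n, U n ⊆ ⋃ x ∈ s, cube x (l x) := by
    intro n
    induction n with
    | zero => rw [hU0]; exact empty_subset _
    | succ n ih =>
      rw [hUs n]
      apply union_subset ih
      intro z hz
      rw [mem_iUnion₂] at hz ⊢
      obtain ⟨y, hy, hzy⟩ := hz
      exact ⟨y, mem_iUnion.mpr ⟨n, hy⟩, hzy⟩
  -- coverage
  have hcov : A ⊆ ⋃ x ∈ s, cube x (l x) := by
    intro x hx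
    by_cases hxU : x ∈ U (stg x)
    · exact hUcov _ hxU
    · have hgx : g x ∈ g '' {x' | x' ∈ A ∧ stg x' = stg x ∧ x' ∉ U (stg x)} :=
        ⟨x, ⟨hx, rfl, hxU⟩, rfl⟩
      obtain ⟨y, hyT, hnear⟩ := hTnear (stg x) _ hgx
      rw [mem_iUnion₂]
      refine ⟨y, mem_iUnion.mpr ⟨stg x, hyT⟩, fun i => ?_⟩
      have h2n : (0 : ℝ) < 2 ^ stg x := by positivity
      have e1 : |x i - y i| ≤ |x i - g x i| + |g x i - y i| := abs_sub_le _ _ _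
      have e2 : |x i - g x i| ≤ (l (g x) - l x) / 6 := hgc x hx i
      have e3 : |g x i - y i| ≤ M / (12 * 2 ^ stg x) := hnear i
      have e4 : l (g x) * 2 ^ stg x ≤ M := hstg2 x hx
      have e5 : M < l y * 2 ^ (stg x + 1) := hTlb (stg x) y hyT
      have e6 : 0 < l x := hlpos x hx
      rw [pow_succ] at e5
      have e7 : l (g x) ≤ M / 2 ^ stg x := (le_div_iff₀ h2n).mpr e4
      have e8 : (l (g x) - l x) / 6 ≤ (M / 2 ^ stg x) / 6 := by linarith
      have e9 : (M / 2 ^ stg x) / 6 + M / (12 * 2 ^ stg x) = M / (4 * 2 ^ stg x) := by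
        field_simp
        ring
      have e10 : M / (4 * 2 ^ stg x) < l y / 2 := by
        rw [div_lt_div_iff₀ (by positivity) (by norm_num)]
        nlinarith
      linarith
  -- finiteness of each T n, countability
  obtain ⟨R₀, hR₀⟩ := hAbd.subset_closedBall p₀
  have hR₀0 : 0 ≤ R₀ := by
    have := hR₀ hp₀
    rwa [mem_closedBall, dist_self] at this
  have hcoordA : ∀ z ∈ A, ∀ i, |z i - p₀ i| ≤ R₀ := by
    intro z hz i
    refine le_trans (coord_le_dist z p₀ i) ?_
    have := hR₀ hz
    rwa [mem_closedBall] at this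
  have hTfin : ∀ n, (T n).Finite := by
    intro n
    obtain ⟨m, hm⟩ := exists_nat_ge ((2 * R₀ + δs n) / δs n)
    have hm' : 2 * R₀ + δs n ≤ m * δs n := by
      rw [div_le_iff₀ (hδpos n)] at hm
      linarith
    exact (packing p₀ (hδpos n) hR₀0 (fun y hy i => hcoordA y (hTA n y hy) i)
      (hTsep n) hm').1
  have hcount : s.Countable := countable_iUnion fun n => (hTfin n).countable
  -- overlap bound
  have hover : ∀ p : EuclideanSpace ℝ (Fin d),
      {x ∈ s | p ∈ cube x (l x)}.encard ≤ ((2 * 4 ^ d * 13 ^ d : ℕ) : ℕ∞) := by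
    intro p
    set N := {x ∈ s | p ∈ cube x (l x)} with hNdef
    set P : ℕ → Set (EuclideanSpace ℝ (Fin d)) := fun n => {x ∈ T n | p ∈ cube x (l x)}
      with hPdef
    have hPT : ∀ n, P n ⊆ T n := fun n x hx => hx.1
    -- per-stage packing bound
    have hPbound : ∀ n, (P n).encard ≤ ((13 ^ d : ℕ) : ℕ∞) := by
      intro n
      have h2n : (0 : ℝ) < 2 ^ n := by positivity
      have hRn : ∀ y ∈ P n, ∀ i, |y i - p i| ≤ M / (2 * 2 ^ n) := by
        intro y hy i
        have h1 : |p i - y i| ≤ l y / 2 := hy.2 i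
        rw [abs_sub_comm] at h1
        have h2 : l y ≤ M / 2 ^ n := (le_div_iff₀ h2n).mpr (hTub n y hy.1)
        have h3 : M / 2 ^ n / 2 = M / (2 * 2 ^ n) := by ring
        linarith
      have hm13 : 2 * (M / (2 * 2 ^ n)) + δs n ≤ (13 : ℕ) * δs n := by
        rw [hδdef]
        have : 2 * (M / (2 * 2 ^ n)) + M / (12 * 2 ^ n) = 13 * (M / (12 * 2 ^ n)) := by
          field_simp
          ring
        rw [this]
        exact le_of_eq (by push_cast; ring)
      exact (packing p (hδpos n) (by positivity) hRn ((hTsep n).mono (hPT n)) hm13).2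
    -- the class map
    set CL : EuclideanSpace ℝ (Fin d) → (Fin d → Bool × Bool) := fun y i =>
      (decide (0 ≤ y i - p i), decide (l y / 4 < |y i - p i|)) with hCLdef
    -- cubes containing p from far-apart stages have different classes
    have hKEY : ∀ m n : ℕ, m + 2 ≤ n → ∀ y ∈ P m, ∀ y' ∈ P n, CL y ≠ CL y' := by
      intro m n hmn y hy y' hy' hCL
      obtain ⟨x', ⟨hx'A, hx'st, hx'U⟩, hgx'⟩ := hTW n hy'.1
      have hx'nc : x' ∉ cube y (l y) := fun hc => hx'U (hcubU m n (by omega) y hy.1 hc)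
      have hexk : ∃ k, l y / 2 < |x' k - y k| := by
        by_contra hc
        push_neg at hc
        exact hx'nc (fun i => hc i)
      obtain ⟨k, hk⟩ := hexk
      have hly' : 0 < l y' := hTpos n y' hy'.1
      have hly : 0 < l y := hTpos m y hy.1
      -- scale comparison : 2 * l y' < l y
      have hscale : 2 * l y' < l y := by
        have h2m : (0 : ℝ) < 2 ^ (m + 1) := by positivity
        have h1 : (2 : ℝ) ^ (m + 2) ≤ 2 ^ n := pow_le_pow_right₀ one_le_two hmn
        have h2 : l y' * 2 ^ (m + 2) ≤ l y' * 2 ^ n :=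
          mul_le_mul_of_nonneg_left h1 hly'.le
        have h3 : l y' * 2 ^ n ≤ M := hTub n y' hy'.1
        have h4 : M < l y * 2 ^ (m + 1) := hTlb m y hy.1
        have h5 : l y' * 2 ^ (m + 2) < l y * 2 ^ (m + 1) := by linarith
        rw [pow_succ 2 (m + 1)] at h5
        have h6 : (2 * l y') * 2 ^ (m + 1) < l y * 2 ^ (m + 1) := by ring_nf; ring_nf at h5; linarith
        exact lt_of_mul_lt_mul_right h6 (le_of_lt h2m)
      have hCLk := congrFun hCL k
      rw [hCLdef] at hCLk
      simp only [Prod.mk.injEq] at hCLk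
      have hsgn : (0 ≤ y k - p k) ↔ (0 ≤ y' k - p k) := by
        have := hCLk.1
        rwa [decide_eq_decide] at this
      have hhalf0 : (l y / 4 < |y k - p k|) ↔ (l y' / 4 < |y' k - p k|) := by
        have := hCLk.2
        rwa [decide_eq_decide] at this
      have ha : |y k - p k| ≤ l y / 2 := by
        rw [abs_sub_comm]
        exact hy.2 k
      have hb : |y' k - p k| ≤ l y' / 2 := by
        rw [abs_sub_comm]
        exact hy'.2 k
      have hub : |x' k - y' k| ≤ (l y' / 2) / 3 := by
        have h7 := hgc x' hx'A k
        rw [hgx'] at h7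
        have h8 := hlpos x' hx'A
        have : (l y' - l x') / 6 ≤ (l y' / 2) / 3 := by linarith
        linarith
      refine aux_real (h := l y / 2) (h' := l y' / 2) (a := y k - p k) (b := y' k - p k)
        (u := x' k - p k) (by linarith) (by linarith) ha hb ?_ ?_ hsgn ?_
      · rw [show (x' k - p k) - (y k - p k) = x' k - y k by ring]
        exact hk
      · rw [show (x' k - p k) - (y' k - p k) = x' k - y' k by ring]
        exact hub
      · rw [show l y / 2 / 2 = l y / 4 by ring, show l y' / 2 / 2 = l y' / 4 by ring]
        exact hhalf0
    -- the set of active stages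
    set SS := {n : ℕ | (P n).Nonempty} with hSSdef
    have hNsub : N ⊆ ⋃ n ∈ SS, P n := by
      intro x hx
      obtain ⟨hxs, hxc⟩ := hx
      rw [hsdef, mem_iUnion] at hxs
      obtain ⟨n, hn⟩ := hxs
      exact mem_iUnion₂.mpr ⟨n, ⟨x, hn, hxc⟩, hn, hxc⟩
    have hwex : ∀ n, ∃ z, n ∈ SS → z ∈ P n := by
      intro n
      by_cases hn : n ∈ SS
      · exact ⟨hn.choose, fun _ => hn.choose_spec⟩
      · exact ⟨p, fun h => absurd h hn⟩
    choose w hw using hwex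
    set φ : ℕ → ((Fin d → Bool × Bool) × Bool) := fun n =>
      (CL (w n), decide (∃ m ∈ SS, m < n ∧ CL (w m) = CL (w n))) with hφdef
    have hφinj : Set.InjOn φ SS := by
      have key2 : ∀ m n, m ∈ SS → n ∈ SS → m < n → φ m = φ n → False := by
        intro m n hm hn hmn heq
        rw [hφdef] at heq
        simp only [Prod.mk.injEq] at heq
        have hCLe : CL (w m) = CL (w n) := heq.1
        by_cases hadj : m + 2 ≤ n
        · exact hKEY m n hadj (w m) (hw m hm) (w n) (hw n hn) hCLe
        · have hEn : ∃ m' ∈ SS, m' < n ∧ CL (w m') = CL (w n) := ⟨m, hm, hmn, hCLe⟩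
          have hEm : ∃ m' ∈ SS, m' < m ∧ CL (w m') = CL (w m) := by
            have h1 : decide (∃ m' ∈ SS, m' < m ∧ CL (w m') = CL (w m)) = true :=
              heq.2.trans (decide_eq_true hEn)
            exact of_decide_eq_true h1
          obtain ⟨m', hm', hm'lt, hCL'⟩ := hEm
          exact hKEY m' n (by omega) (w m') (hw m' hm') (w n) (hw n hn)
            (hCL'.trans hCLe)
      intro a ha b hb hab
      by_contra hne
      rcases lt_or_gt_of_ne hne with h | h
      · exact key2 a b ha hb h hab
      · exact key2 b a hb ha h hab.symm
    have hSSfin : SS.Finite := Set.Finite.of_finite_image (Set.toFinite _) hφinj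
    have hSScard : hSSfin.toFinset.card ≤ 2 * 4 ^ d := by
      have h1 : ∀ a ∈ hSSfin.toFinset, φ a ∈ (Finset.univ : Finset ((Fin d → Bool × Bool) × Bool)) :=
        fun a _ => Finset.mem_univ _
      have h2 : Set.InjOn φ ↑hSSfin.toFinset := by
        rwa [Set.Finite.coe_toFinset]
      have h3 := Finset.card_le_card_of_injOn φ h1 h2
      rw [Finset.card_univ] at h3
      refine h3.trans (le_of_eq ?_)
      rw [Fintype.card_prod, Fintype.card_fun, Fintype.card_prod, Fintype.card_bool,
        Fintype.card_fin]
      ring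
    -- assembling
    have hbi : ∀ Fs : Finset ℕ, (⋃ n ∈ Fs, P n).encard ≤ (Fs.card : ℕ∞) * ((13 ^ d : ℕ) : ℕ∞) := by
      intro Fs
      induction Fs using Finset.induction_on with
      | empty => simp
      | @insert a Fs' hnotmem ih =>
        rw [Finset.set_biUnion_insert]
        refine le_trans (Set.encard_union_le _ _) ?_
        rw [Finset.card_insert_of_notMem hnotmem]
        push_cast
        calc (P a).encard + (⋃ n ∈ Fs', P n).encard
            ≤ ((13 ^ d : ℕ) : ℕ∞) + (Fs'.card : ℕ∞) * ((13 ^ d : ℕ) : ℕ∞) :=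
              add_le_add (hPbound a) ih
          _ = ((Fs'.card : ℕ∞) + 1) * ((13 ^ d : ℕ) : ℕ∞) := by ring
    have h1 : N ⊆ ⋃ n ∈ hSSfin.toFinset, P n := by
      intro x hx
      obtain ⟨n, hnSS, hxP⟩ := mem_iUnion₂.mp (hNsub hx)
      exact mem_iUnion₂.mpr ⟨n, hSSfin.mem_toFinset.mpr hnSS, hxP⟩
    refine le_trans (Set.encard_mono h1) (le_trans (hbi _) ?_)
    have h2 : (hSSfin.toFinset.card : ℕ∞) ≤ ((2 * 4 ^ d : ℕ) : ℕ∞) := by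
      exact_mod_cast hSScard
    calc (hSSfin.toFinset.card : ℕ∞) * ((13 ^ d : ℕ) : ℕ∞)
        ≤ ((2 * 4 ^ d : ℕ) : ℕ∞) * ((13 ^ d : ℕ) : ℕ∞) := mul_le_mul_left h2 _
      _ = ((2 * 4 ^ d * 13 ^ d : ℕ) : ℕ∞) := by push_cast; ring
  -- conclusion
  refine ⟨s, hsA, hcount, hcov, hover, ?_⟩
  intro z hz x hxs hzc
  have hxG : x ∈ G := by
    rw [hsdef, mem_iUnion] at hxs
    obtain ⟨n, hn⟩ := hxs
    exact hTG n x hn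
  exact hxG.2 z hz hzc
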